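/- Let d ≥ 3 and 1 ≤ k ≤ d−2 be integers, let p be an IDF prime for (d,k), and let r be the unique integer with 0 ≤ r ≤ k and p ∣ d−r. Let α, β be nonzero rational numbers with v_p(β) < 0 < v_p(α) and min{v_p(α) + v_p(d−r) + d·v_p(β), v_p(α) + (d−r)·v_p(β)} = v_p(β). Let x, y be rational numbers such that x ≠ 0 with v_p(x) ≥ v_p(β), and such that y = 0 or v_p(y) ≥ v_p(α). Then for every integer n ≥ 0: (a) f^n_{α,β}(x) = 0 or v_p(f^n_{α,β}(x)) ≥ v_p(β); and (b) f^n_{α,β}(x+y) − f^n_{α,β}(x) = 0 or v_p(f^n_{α,β}(x+y) − f^n_{α,β}(x)) ≥ v_p(α). -/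

import Mathlib

open Finset Function

/-- The coefficient `b_i` of `z^(d-i)` in the normalized dynamical Belyi polynomial
`B_{d,k}`. -/
def belyiCoeff (d k i : ℕ) : ℚ :=
  ((-1 : ℚ) ^ (k - i) / ((k - i).factorial * i.factorial)) *
    ∏ j ∈ (Finset.range (k + 1)).erase i, ((d : ℚ) - (j : ℚ))

/-- The normalized dynamical Belyi polynomial `B_{d,k}` as a function on `ℚ`. -/
def belyi (d k : ℕ) (z : ℚ) : ℚ :=
  ∑ i ∈ Finset.range (k + 1), belyiCoeff d k i * z ^ (d - i)

/-- The map `f_{a,c}(z) = a · B_{d,k}(z) + c`. -/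
def belyiMap (d k : ℕ) (a c z : ℚ) : ℚ := a * belyi d k z + c

/-- `p` is an index divisor free (IDF) prime for the pair `(d,k)`:
`p` is a prime with `p > k`, `p ∣ d - r` for some `r ≤ k`, and `r ∤ v_p(d-r)`. -/
def IsIDFPrime (d k p : ℕ) : Prop :=
  p.Prime ∧ k < p ∧ ∃ r ≤ k, p ∣ (d - r) ∧ ¬ (r ∣ padicValNat p (d - r))

/-- A rational number is `p`-integral if it is zero or has nonnegative `p`-adic valuation. -/
def PIntegral (p : ℕ) (x : ℚ) : Prop := x = 0 ∨ 0 ≤ padicValRat p x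

section Aux
variable {p : ℕ} [hp : Fact p.Prime]

lemma add_val_le {c : ℤ} {a b : ℚ} (ha : a = 0 ∨ c ≤ padicValRat p a)
    (hb : b = 0 ∨ c ≤ padicValRat p b) :
    a + b = 0 ∨ c ≤ padicValRat p (a + b) := by
  rcases ha with rfl | ha
  · simpa using hb
  rcases hb with rfl | hb
  · simpa using Or.inr ha
  by_cases hz : a + b = 0
  · exact Or.inl hz
  · exact Or.inr ((le_min ha hb).trans (padicValRat.min_le_padicValRat_add hz))

lemma sum_val_le {ι : Type*} {c : ℤ} (s : Finset ι) (f : ι → ℚ)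
    (h : ∀ i ∈ s, f i = 0 ∨ c ≤ padicValRat p (f i)) :
    (∑ i ∈ s, f i) = 0 ∨ c ≤ padicValRat p (∑ i ∈ s, f i) := by
  classical
  induction s using Finset.induction_on with
  | empty => simp
  | insert _ _ ha ih =>
    rw [Finset.sum_insert ha]
    exact add_val_le (h _ (Finset.mem_insert_self _ _))
      (ih fun i hi => h i (Finset.mem_insert_of_mem hi))

lemma pow_val_ge {c : ℤ} {q : ℚ} {t : ℕ}
    (hq : q ≠ 0 → c ≤ padicValRat p q) (ht : q ^ t ≠ 0) :
    (t : ℤ) * c ≤ padicValRat p (q ^ t) := by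
  by_cases h0 : q = 0
  · subst h0
    have : t = 0 := by by_contra h; exact ht (zero_pow h)
    simp [this]
  · rw [padicValRat.pow q]
    exact mul_le_mul_of_nonneg_left (hq h0) (by positivity)

lemma belyiCoeff_ne_zero (d k i : ℕ) (hd : 3 ≤ d) (hk2 : k ≤ d - 2) :
    belyiCoeff d k i ≠ 0 := by
  unfold belyiCoeff
  apply mul_ne_zero
  · apply div_ne_zero
    · exact pow_ne_zero _ (by norm_num)
    · positivity
  · apply Finset.prod_ne_zero_iff.mpr
    intro j hj
    have hj' : j ≤ k := Nat.lt_succ_iff.mp (Finset.mem_range.mp (Finset.mem_erase.mp hj).2)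
    have : j < d := by omega
    have : (j : ℚ) < d := by exact_mod_cast this
    linarith [sub_ne_zero_of_ne (ne_of_gt this)]

lemma belyiCoeff_eq (d k i : ℕ) (hd : 3 ≤ d) (hk2 : k ≤ d - 2) :
    belyiCoeff d k i =
      ((-1 : ℚ) ^ (k - i) / ((k - i).factorial * i.factorial)) *
        ((∏ j ∈ (Finset.range (k + 1)).erase i, (d - j) : ℕ) : ℚ) := by
  unfold belyiCoeff
  congr 1
  rw [Nat.cast_prod]
  refine Finset.prod_congr rfl fun j hj => ?_
  have hj' : j ≤ k := Nat.lt_succ_iff.mp (Finset.mem_range.mp (Finset.mem_erase.mp hj).2)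
  rw [Nat.cast_sub (by omega)]

lemma val_unit_part (d k i : ℕ) (hkp : k < p) (hik : i ≤ k) :
    padicValRat p ((-1 : ℚ) ^ (k - i) / ((k - i).factorial * i.factorial)) = 0 := by
  have h1 : padicValRat p ((-1 : ℚ) ^ (k - i)) = 0 := by
    rcases neg_one_pow_eq_or ℚ (k - i) with h | h <;> rw [h]
    · exact padicValRat.one
    · rw [show (-1 : ℚ) = -(1:ℚ) by norm_num, padicValRat.neg, padicValRat.one]
  have hfac : ∀ n : ℕ, n < p → padicValNat p n.factorial = 0 := by
    intro n hn
    apply padicValNat.eq_zero_of_not_dvd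
    rw [hp.out.dvd_factorial]
    omega
  have h2 : padicValRat p (((k - i).factorial : ℚ) * (i.factorial : ℚ)) = 0 := by
    rw [padicValRat.mul (by positivity) (by positivity),
      padicValRat.of_nat, padicValRat.of_nat, hfac _ (by omega), hfac _ (by omega)]
    simp
  rw [padicValRat.div (pow_ne_zero _ (by norm_num)) (by positivity), h1, h2, sub_zero]

lemma belyiCoeff_val_nonneg (d k i : ℕ) (hd : 3 ≤ d) (hk2 : k ≤ d - 2) (hkp : k < p) (hik : i ≤ k) :
    0 ≤ padicValRat p (belyiCoeff d k i) := by
  rw [belyiCoeff_eq d k i hd hk2]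
  set N : ℕ := ∏ j ∈ (Finset.range (k + 1)).erase i, (d - j) with hN
  have hNpos : 0 < N := by
    apply Finset.prod_pos
    intro j hj
    have : j ≤ k := Nat.lt_succ_iff.mp (Finset.mem_range.mp (Finset.mem_erase.mp hj).2)
    omega
  rw [padicValRat.mul (by
      apply div_ne_zero (pow_ne_zero _ (by norm_num)); positivity)
    (by exact_mod_cast hNpos.ne'), val_unit_part d k i hkp hik, zero_add,
    padicValRat.of_nat]
  positivity

lemma belyiCoeff_val_ge (d k i r : ℕ) (hd : 3 ≤ d) (hk2 : k ≤ d - 2) (hkp : k < p)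
    (hik : i ≤ k) (hr : r ≤ k) (hir : i ≠ r) :
    (padicValNat p (d - r) : ℤ) ≤ padicValRat p (belyiCoeff d k i) := by
  rw [belyiCoeff_eq d k i hd hk2]
  set N : ℕ := ∏ j ∈ (Finset.range (k + 1)).erase i, (d - j) with hN
  have hNpos : 0 < N := by
    apply Finset.prod_pos
    intro j hj
    have : j ≤ k := Nat.lt_succ_iff.mp (Finset.mem_range.mp (Finset.mem_erase.mp hj).2)
    omega
  have hmem : r ∈ (Finset.range (k + 1)).erase i :=
    Finset.mem_erase.mpr ⟨Ne.symm hir, Finset.mem_range.mpr (by omega)⟩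
  have hdvd : (d - r) ∣ N := Finset.dvd_prod_of_mem _ hmem
  have hpm : p ^ padicValNat p (d - r) ∣ N := dvd_trans pow_padicValNat_dvd hdvd
  have hle : padicValNat p (d - r) ≤ padicValNat p N :=
    (padicValNat_dvd_iff_le hNpos.ne').mp hpm
  rw [padicValRat.mul (by
      apply div_ne_zero (pow_ne_zero _ (by norm_num)); positivity)
    (by exact_mod_cast hNpos.ne'), val_unit_part d k i hkp hik, zero_add, padicValRat.of_nat]
  exact_mod_cast hle

end Aux

section Steps
variable {p : ℕ} [hp : Fact p.Prime]

lemma stepA (d k r : ℕ) (hd : 3 ≤ d) (hk2 : k ≤ d - 2) (hkp : k < p) (hr : r ≤ k)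
    (α β : ℚ) (hα : α ≠ 0) (hβ : β ≠ 0)
    (hvβ : padicValRat p β < 0) (hvα : 0 < padicValRat p α)
    (h1 : padicValRat p β ≤
      padicValRat p α + (padicValNat p (d - r) : ℤ) + (d : ℤ) * padicValRat p β)
    (h2 : padicValRat p β ≤ padicValRat p α + ((d : ℤ) - (r : ℤ)) * padicValRat p β)
    (X : ℚ) (hX : X = 0 ∨ padicValRat p β ≤ padicValRat p X) :
    belyiMap d k α β X = 0 ∨ padicValRat p β ≤ padicValRat p (belyiMap d k α β X) := by
  have key : belyiMap d k α β X =
      (∑ i ∈ Finset.range (k + 1), α * belyiCoeff d k i * X ^ (d - i)) + β := by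
    unfold belyiMap belyi
    rw [Finset.mul_sum]
    congr 1
    exact Finset.sum_congr rfl fun i _ => by ring
  rw [key]
  refine add_val_le ?_ (Or.inr le_rfl)
  refine sum_val_le _ _ fun i hi => ?_
  have hik : i ≤ k := Nat.lt_succ_iff.mp (Finset.mem_range.mp hi)
  have hei : 2 ≤ d - i := by omega
  by_cases hX0 : X = 0
  · left; rw [hX0, zero_pow (by omega), mul_zero]
  have hvX : padicValRat p β ≤ padicValRat p X := hX.resolve_left hX0
  right
  have hb := belyiCoeff_ne_zero d k i hd hk2
  rw [padicValRat.mul (mul_ne_zero hα hb) (pow_ne_zero _ hX0),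
    padicValRat.mul hα hb, padicValRat.pow X]
  have hbnn : 0 ≤ padicValRat p (belyiCoeff d k i) :=
    belyiCoeff_val_nonneg d k i hd hk2 hkp hik
  rcases le_or_gt 0 (padicValRat p X) with hvX0 | hvX0
  · have : (0:ℤ) ≤ (d - i : ℕ) * padicValRat p X := by positivity
    linarith
  rcases eq_or_ne i r with rfl | hir
  · have hcast : ((d - i : ℕ) : ℤ) = (d : ℤ) - (i : ℤ) := by
      rw [Nat.cast_sub (by omega)]
    have hmul : ((d : ℤ) - i) * padicValRat p β ≤ ((d : ℤ) - i) * padicValRat p X :=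
      mul_le_mul_of_nonneg_left hvX (by push_cast; omega)
    rw [hcast]
    linarith
  · have hbm : (padicValNat p (d - r) : ℤ) ≤ padicValRat p (belyiCoeff d k i) :=
      belyiCoeff_val_ge d k i r hd hk2 hkp hik hr hir
    have hle : ((d - i : ℕ) : ℤ) ≤ (d : ℤ) := by
      have := Nat.sub_le d i; exact_mod_cast this
    have h3 : (d : ℤ) * padicValRat p X ≤ ((d - i : ℕ) : ℤ) * padicValRat p X :=
      mul_le_mul_of_nonpos_right hle (le_of_lt hvX0)
    have h4 : (d : ℤ) * padicValRat p β ≤ (d : ℤ) * padicValRat p X :=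
      mul_le_mul_of_nonneg_left hvX (by positivity)
    linarith

lemma stepB (d k r : ℕ) (hd : 3 ≤ d) (hk2 : k ≤ d - 2) (hkp : k < p) (hr : r ≤ k)
    (α β : ℚ) (hα : α ≠ 0) (hβ : β ≠ 0)
    (hvβ : padicValRat p β < 0) (hvα : 0 < padicValRat p α)
    (h1 : padicValRat p β ≤
      padicValRat p α + (padicValNat p (d - r) : ℤ) + (d : ℤ) * padicValRat p β)
    (h2 : padicValRat p β ≤ padicValRat p α + ((d : ℤ) - (r : ℤ)) * padicValRat p β)
    (X X' : ℚ) (hX : X = 0 ∨ padicValRat p β ≤ padicValRat p X)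
    (hX' : X' = 0 ∨ padicValRat p β ≤ padicValRat p X')
    (hY : X' - X = 0 ∨ padicValRat p α ≤ padicValRat p (X' - X)) :
    belyiMap d k α β X' - belyiMap d k α β X = 0 ∨
      padicValRat p α ≤ padicValRat p (belyiMap d k α β X' - belyiMap d k α β X) := by
  rcases hY with hY0 | hvY
  · left
    rw [sub_eq_zero] at hY0 ⊢
    rw [hY0]
  have hYne : X' - X ≠ 0 := by
    intro h; rw [h] at hvY; rw [padicValRat.zero] at hvY; linarith
  have key : belyiMap d k α β X' - belyiMap d k α β X =
      ∑ i ∈ Finset.range (k + 1),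
        α * belyiCoeff d k i * (X' ^ (d - i) - X ^ (d - i)) := by
    unfold belyiMap belyi
    rw [add_sub_add_right_eq_sub, Finset.mul_sum, Finset.mul_sum, ← Finset.sum_sub_distrib]
    exact Finset.sum_congr rfl fun i _ => by ring
  rw [key]
  refine sum_val_le _ _ fun i hi => ?_
  have hik : i ≤ k := Nat.lt_succ_iff.mp (Finset.mem_range.mp hi)
  have hei : 2 ≤ d - i := by omega
  by_cases hD : X' ^ (d - i) - X ^ (d - i) = 0
  · left; rw [hD, mul_zero]
  right
  set e : ℕ := d - i with he
  set S : ℚ := ∑ t ∈ Finset.range e, X' ^ t * X ^ (e - 1 - t) with hS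
  have hgeom : S * (X' - X) = X' ^ e - X ^ e := geom_sum₂_mul X' X e
  have hSne : S ≠ 0 := by
    intro h; rw [h, zero_mul] at hgeom; exact hD hgeom.symm
  -- valuation of S
  have hvβ' : padicValRat p β ≤ 0 := le_of_lt hvβ
  have hvS : ((e - 1 : ℕ) : ℤ) * padicValRat p β ≤ padicValRat p S := by
    have := sum_val_le (p := p) (c := ((e - 1 : ℕ) : ℤ) * padicValRat p β)
      (Finset.range e) (fun t => X' ^ t * X ^ (e - 1 - t)) ?_
    · exact (this.resolve_left (by rw [← hS]; exact hSne))
    intro t ht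
    have ht' : t ≤ e - 1 := by
      have := Finset.mem_range.mp ht; omega
    by_cases hz : X' ^ t * X ^ (e - 1 - t) = 0
    · exact Or.inl hz
    right
    have hz1 : X' ^ t ≠ 0 := fun h => hz (by rw [h, zero_mul])
    have hz2 : X ^ (e - 1 - t) ≠ 0 := fun h => hz (by rw [h, mul_zero])
    rw [padicValRat.mul hz1 hz2]
    have b1 : (t : ℤ) * padicValRat p β ≤ padicValRat p (X' ^ t) :=
      pow_val_ge (fun h => hX'.resolve_left h) hz1
    have b2 : ((e - 1 - t : ℕ) : ℤ) * padicValRat p β ≤ padicValRat p (X ^ (e - 1 - t)) :=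
      pow_val_ge (fun h => hX.resolve_left h) hz2
    have hcast : ((e - 1 : ℕ) : ℤ) = (t : ℤ) + ((e - 1 - t : ℕ) : ℤ) := by
      push_cast [Nat.cast_sub ht', Nat.cast_sub (by omega : (1:ℕ) ≤ e)]
      ring
    rw [hcast, add_mul]
    exact add_le_add b1 b2
  -- valuation of the term
  rw [padicValRat.mul (mul_ne_zero hα (belyiCoeff_ne_zero d k i hd hk2)) hD,
    padicValRat.mul hα (belyiCoeff_ne_zero d k i hd hk2), ← hgeom,
    padicValRat.mul hSne hYne]
  have hbnn : 0 ≤ padicValRat p (belyiCoeff d k i) :=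
    belyiCoeff_val_nonneg d k i hd hk2 hkp hik
  rcases eq_or_ne i r with rfl | hir
  · have hcast : ((e - 1 : ℕ) : ℤ) = (d : ℤ) - (i : ℤ) - 1 := by
      rw [he, Nat.cast_sub (by omega), Nat.cast_sub (by omega)]
      push_cast; ring
    rw [hcast] at hvS
    have : padicValRat p α + ((d : ℤ) - i - 1) * padicValRat p β ≥ 0 := by
      have hexp : ((d : ℤ) - i) * padicValRat p β
          = ((d : ℤ) - i - 1) * padicValRat p β + padicValRat p β := by ring
      rw [hexp] at h2
      linarith
    linarith
  · have hbm : (padicValNat p (d - r) : ℤ) ≤ padicValRat p (belyiCoeff d k i) :=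
      belyiCoeff_val_ge d k i r hd hk2 hkp hik hr hir
    have hle : ((e - 1 : ℕ) : ℤ) ≤ (d : ℤ) - 1 := by
      have : e - 1 ≤ d - 1 := by omega
      have := (Nat.cast_le (α := ℤ)).mpr this
      rw [Nat.cast_sub (by omega : (1:ℕ) ≤ d)] at this
      exact_mod_cast this
    have h3 : ((d : ℤ) - 1) * padicValRat p β ≤ ((e - 1 : ℕ) : ℤ) * padicValRat p β :=
      mul_le_mul_of_nonpos_right hle hvβ'
    have hexp : (d : ℤ) * padicValRat p β
        = ((d : ℤ) - 1) * padicValRat p β + padicValRat p β := by ring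
    rw [hexp] at h1
    linarith

end Steps

/-- (Lemma on iterates, Case 4.iii setup.)  Under the stated valuation
hypotheses, for every `n ≥ 0`, the orbit `f^n_{α,β}(x)` has valuation at least `v_p(β)`
(or vanishes) and the difference `f^n_{α,β}(x+y) − f^n_{α,β}(x)` has valuation at least
`v_p(α)` (or vanishes). -/
theorem padicValRat_belyiMap_iterate (d k p r : ℕ) (hd : 3 ≤ d) (hk1 : 1 ≤ k)
    (hk2 : k ≤ d - 2) (hp : IsIDFPrime d k p) (hr : r ≤ k) (hpr : p ∣ (d - r))
    (hidf : ¬ (r ∣ padicValNat p (d - r)))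
    (α β : ℚ) (hα : α ≠ 0) (hβ : β ≠ 0)
    (hvβ : padicValRat p β < 0) (hvα : 0 < padicValRat p α)
    (hmin : min (padicValRat p α + (padicValNat p (d - r) : ℤ) + (d : ℤ) * padicValRat p β)
        (padicValRat p α + ((d : ℤ) - (r : ℤ)) * padicValRat p β) = padicValRat p β)
    (x y : ℚ) (hx : x ≠ 0) (hvx : padicValRat p β ≤ padicValRat p x)
    (hy : y = 0 ∨ padicValRat p α ≤ padicValRat p y) :
    ∀ n : ℕ,
      ((belyiMap d k α β)^[n] x = 0 ∨
        padicValRat p β ≤ padicValRat p ((belyiMap d k α β)^[n] x)) ∧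
      ((belyiMap d k α β)^[n] (x + y) - (belyiMap d k α β)^[n] x = 0 ∨
        padicValRat p α ≤
          padicValRat p ((belyiMap d k α β)^[n] (x + y) - (belyiMap d k α β)^[n] x)) := by
  haveI : Fact p.Prime := ⟨hp.1⟩
  have hkp : k < p := hp.2.1
  have h1 : padicValRat p β ≤
      padicValRat p α + (padicValNat p (d - r) : ℤ) + (d : ℤ) * padicValRat p β :=
    hmin.symm.trans_le (min_le_left _ _)
  have h2 : padicValRat p β ≤ padicValRat p α + ((d : ℤ) - (r : ℤ)) * padicValRat p β :=
    hmin.symm.trans_le (min_le_right _ _)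
  have key : ∀ n : ℕ,
      ((belyiMap d k α β)^[n] x = 0 ∨
        padicValRat p β ≤ padicValRat p ((belyiMap d k α β)^[n] x)) ∧
      ((belyiMap d k α β)^[n] (x + y) = 0 ∨
        padicValRat p β ≤ padicValRat p ((belyiMap d k α β)^[n] (x + y))) ∧
      ((belyiMap d k α β)^[n] (x + y) - (belyiMap d k α β)^[n] x = 0 ∨
        padicValRat p α ≤
          padicValRat p ((belyiMap d k α β)^[n] (x + y) - (belyiMap d k α β)^[n] x)) := by
    intro n
    induction n with
    | zero =>
      refine ⟨Or.inr hvx, ?_, ?_⟩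
      · simp only [Function.iterate_zero_apply]
        refine add_val_le (Or.inr hvx) ?_
        rcases hy with rfl | hvy
        · exact Or.inl rfl
        · exact Or.inr (by linarith)
      · simp only [Function.iterate_zero_apply, add_sub_cancel_left]
        exact hy
    | succ n ih =>
      obtain ⟨ihx, ihxy, ihd⟩ := ih
      rw [Function.iterate_succ_apply', Function.iterate_succ_apply']
      exact ⟨stepA d k r hd hk2 hkp hr α β hα hβ hvβ hvα h1 h2 _ ihx,
        stepA d k r hd hk2 hkp hr α β hα hβ hvβ hvα h1 h2 _ ihxy,
        stepB d k r hd hk2 hkp hr α β hα hβ hvβ hvα h1 h2 _ _ ihx ihxy ihd⟩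
  exact fun n => ⟨(key n).1, (key n).2.2⟩
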